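/- Let W : ℝ → ℝ be continuous, G : ℝ → ℝ differentiable with G(x) > 0, and let c, c₂, c₃ ∈ ℝ. Define u(x,t) = ∫₀ᵗ W(s) ds + log(c·∫₀ˣ 1/G(y) dy + c₂) + c₃, where c·∫₀ˣ 1/G(y) dy + c₂ > 0 on the domain considered. Then u satisfies the PDE u_t = ∂ₓ(G(x)·e^u·u_x) + W(t). -/

import Mathlib

/-- Additive separated solution of `u_t = (G(x) e^u u_x)_x + W(t)` for
exponential diffusivity `A(u) = e^u`. -/
theorem stmt_0 (W G : ℝ → ℝ) (hW : Continuous W) (hG : Differentiable ℝ G)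
    (hGpos : ∀ x, 0 < G x) (c c₂ c₃ : ℝ)
    (u : ℝ → ℝ → ℝ)
    (hu : ∀ x t, u x t =
      (∫ s in (0:ℝ)..t, W s) + Real.log (c * (∫ y in (0:ℝ)..x, 1 / G y) + c₂) + c₃) :
    ∀ x t, 0 < c * (∫ y in (0:ℝ)..x, 1 / G y) + c₂ →
      deriv (fun t' => u x t') t =
        deriv (fun x' => G x' * Real.exp (u x' t) * deriv (fun y => u y t) x') x + W t := by
  intro x t hpos
  set T : ℝ → ℝ := fun t => ∫ s in (0:ℝ)..t, W s with hTdef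
  set F : ℝ → ℝ := fun z => ∫ y in (0:ℝ)..z, 1 / G y with hFdef
  have hGcont : Continuous G := hG.continuous
  have hinv : Continuous (fun y => 1 / G y) :=
    continuous_const.div hGcont (fun y => (hGpos y).ne')
  have hF : ∀ z, HasDerivAt F (1 / G z) z := fun z =>
    intervalIntegral.integral_hasDerivAt_right (hinv.intervalIntegrable _ _)
      (hinv.stronglyMeasurableAtFilter _ _) hinv.continuousAt
  have hFc : Continuous F :=
    continuous_iff_continuousAt.mpr fun z => (hF z).continuousAt
  have hT' : HasDerivAt T (W t) t :=
    intervalIntegral.integral_hasDerivAt_right (hW.intervalIntegrable _ _)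
      (hW.stronglyMeasurableAtFilter _ _) hW.continuousAt
  have hL : deriv (fun t' => u x t') t = W t := by
    have heq : (fun t' => u x t') = fun t' => T t' + (Real.log (c * F x + c₂) + c₃) := by
      funext t'; rw [hu]; ring
    rw [heq, deriv_add_const]
    exact hT'.deriv
  have hderiv_u : ∀ z, 0 < c * F z + c₂ →
      deriv (fun y => u y t) z = c * (1 / G z) / (c * F z + c₂) := by
    intro z hz
    have h1 : HasDerivAt (fun y => c * F y + c₂) (c * (1 / G z)) z :=
      ((hF z).const_mul c).add_const c₂
    have h2 : HasDerivAt (fun y => Real.log (c * F y + c₂))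
        (c * (1 / G z) / (c * F z + c₂)) z := by
      have := (Real.hasDerivAt_log hz.ne').comp z h1
      simpa [div_eq_mul_inv, mul_comm, Function.comp_def] using this
    have h3 : (fun y => u y t) = fun y => (T t + c₃) + Real.log (c * F y + c₂) := by
      funext y; rw [hu]; ring
    rw [h3]
    exact (h2.const_add _).deriv
  have hS : IsOpen {z : ℝ | 0 < c * F z + c₂} :=
    isOpen_lt continuous_const ((continuous_const.mul hFc).add continuous_const)
  have hev : (fun x' => G x' * Real.exp (u x' t) * deriv (fun y => u y t) x') =ᶠ[nhds x]
      (fun _ => c * Real.exp ((∫ s in (0:ℝ)..t, W s) + c₃)) := by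
    filter_upwards [hS.mem_nhds hpos] with z hz
    have h1 : G z ≠ 0 := (hGpos z).ne'
    have h2 : c * F z + c₂ ≠ 0 := hz.ne'
    rw [hderiv_u z hz, hu]
    change G z * Real.exp ((∫ s in (0:ℝ)..t, W s) + Real.log (c * F z + c₂) + c₃) * _ = _
    simp only [Real.exp_add, Real.exp_log hz]
    field_simp
  rw [hev.deriv_eq, deriv_const, hL, zero_add]
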